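/- arXiv:1706.05796 — 2 statements merged into one kernel-verified Lean document; each statement's English description precedes it below -/
import Mathlib

section
/- Realization of a prescribed output signal (Theorem 4.1, existence part): assume σ is of class C² with σ' ≥ 0 and σ_M = sup σ < ∞, let I : ℝ → ℝ be bounded measurable, and let S : ℝ → [0,∞) be measurable with ∫_ℝ S(w) dw = 1 and ∫_{−∞}^0 S(w) · exp( (‖I‖_∞ + |w| σ_M)² / a ) dw < ∞. Then there exists N̄ > 0 such that N̄ · ∫_ℝ S(w) Z_{N̄,I}(w) dw = a; consequently H(w) := (N̄/a) Z_{N̄,I}(w) S(w) is a probability density (∫_ℝ H = 1) whose associated stationary state has normalized output signal S, i.e. N̄ S(w) = a H(w)/Z_{N̄,I}(w) and a ∫_ℝ H(w)/Z_{N̄,I}(w) dw = N̄. -/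
open MeasureTheory Real Set Filter

/-- The partition function `Z_{N̄,I}(w)` of the stationary LIF problem. -/
noncomputable def Zfun (a VR VF : ℝ) (I σ : ℝ → ℝ) (w N : ℝ) : ℝ :=
  ∫ v in Set.Iic VF, ∫ v' in Set.Icc (max VR v) VF,
    Real.exp ((v' - v) * (v' + v - 2 * I w - 2 * w * σ N) / (2 * a))

noncomputable def psiAux (a VR VF c v : ℝ) : ℝ :=
  ∫ v' in Set.Icc (max VR v) VF, Real.exp ((v' - v) * (v' + v - c) / (2 * a))

noncomputable def phiAux (a VR VF c : ℝ) : ℝ :=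
  ∫ v in Set.Iic VF, psiAux a VR VF c v

lemma psi_nonneg (a VR VF c v : ℝ) : 0 ≤ psiAux a VR VF c v :=
  integral_nonneg fun _ => (Real.exp_pos _).le

lemma exp_cont (a VR c v : ℝ) :
    Continuous fun v' => Real.exp ((v' - v) * (v' + v - c) / (2 * a)) := by
  fun_prop

lemma psi_antitone (a VR VF : ℝ) (ha : 0 < a) {c c' : ℝ} (h : c ≤ c') (v : ℝ) :
    psiAux a VR VF c' v ≤ psiAux a VR VF c v := by
  apply setIntegral_mono_on ((exp_cont a VR c' v).integrableOn_Icc)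
    ((exp_cont a VR c v).integrableOn_Icc) measurableSet_Icc
  intro x hx
  have hxv : v ≤ x := le_trans (le_max_right _ _) hx.1
  have h0 : 0 ≤ x - v := by linarith
  apply Real.exp_le_exp.2
  have : (x - v) * (x + v - c') ≤ (x - v) * (x + v - c) := by nlinarith
  apply div_le_div_of_nonneg_right this ?_ |>.trans_eq rfl
  linarith

-- pointwise factorization of the integrand
lemma exp_factor (a : ℝ) (ha : 0 < a) (c v v' : ℝ) :
    Real.exp ((v' - v) * (v' + v - c) / (2 * a)) =
      Real.exp ((v' - c/2)^2 / (2*a)) * Real.exp (-(v - c/2)^2 / (2*a)) := by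
  rw [← Real.exp_add]
  congr 1
  field_simp
  ring

lemma psi_le (a VR VF c : ℝ) (ha : 0 < a) (hV : VR < VF) (v : ℝ) :
    psiAux a VR VF c v ≤
      (VF - VR) * Real.exp ((max |VR| |VF| + |c|/2)^2 / (2*a)) *
        Real.exp (-(v - c/2)^2 / (2*a)) := by
  set M0 := max |VR| |VF| with hM0
  set C := Real.exp ((M0 + |c|/2)^2 / (2*a)) * Real.exp (-(v - c/2)^2 / (2*a)) with hC
  have hbound : ∀ x ∈ Set.Icc (max VR v) VF,
      ‖Real.exp ((x - v) * (x + v - c) / (2 * a))‖ ≤ C := by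
    intro x hx
    rw [Real.norm_eq_abs, abs_of_pos (Real.exp_pos _), exp_factor a ha]
    apply mul_le_mul_of_nonneg_right ?_ (Real.exp_pos _).le
    apply Real.exp_le_exp.2
    apply div_le_div_of_nonneg_right ?_ (by linarith)
    have h1 : |x| ≤ M0 := by
      rw [abs_le]
      constructor
      · have := neg_abs_le VR; have := le_trans (le_max_left _ _) hx.1
        have : -(|VR|) ≤ x := by
          have := le_trans (le_max_left VR v) hx.1; linarith [neg_abs_le VR]
        linarith [le_max_left |VR| |VF|]
      · exact le_trans (le_trans hx.2 (le_abs_self VF)) (le_max_right _ _)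
    have h2 : |x - c/2| ≤ M0 + |c|/2 := by
      calc |x - c/2| ≤ |x| + |c/2| := abs_sub _ _
        _ ≤ M0 + |c|/2 := by rw [abs_div]; simp; linarith
    calc (x - c/2)^2 = |x - c/2|^2 := (sq_abs _).symm
      _ ≤ (M0 + |c|/2)^2 := by
          apply pow_le_pow_left₀ (abs_nonneg _) h2
  have key := norm_setIntegral_le_of_norm_le_const (μ := volume)
    (s := Set.Icc (max VR v) VF) (by simp [Real.volume_Icc]) hbound
  have hmeas : (volume (Set.Icc (max VR v) VF)).toReal ≤ VF - VR := by
    rw [Real.volume_Icc]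
    rcases le_or_gt (max VR v) VF with h | h
    · rw [ENNReal.toReal_ofReal (by linarith)]
      have := le_max_left VR v; linarith
    · rw [ENNReal.ofReal_of_nonpos (by linarith)]
      simp; linarith
  have h0 : 0 ≤ C := by positivity
  calc psiAux a VR VF c v ≤ ‖psiAux a VR VF c v‖ := le_abs_self _
    _ ≤ C * (volume (Set.Icc (max VR v) VF)).toReal := key
    _ ≤ C * (VF - VR) := by
        apply mul_le_mul_of_nonneg_left hmeas h0
    _ = (VF - VR) * Real.exp ((M0 + |c|/2)^2 / (2*a)) * Real.exp (-(v - c/2)^2 / (2*a)) := by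
        rw [hC]; ring

lemma psi_measurable (a VR VF c : ℝ) : Measurable (psiAux a VR VF c) := by
  have hrw : ∀ v : ℝ, psiAux a VR VF c v =
      ∫ v' in Set.Icc VR VF,
        Set.indicator (Set.Ici v) (fun v' => Real.exp ((v' - v) * (v' + v - c) / (2 * a))) v' := by
    intro v
    have hset : Set.Ici v ∩ Set.Icc VR VF = Set.Icc (max VR v) VF := by
      ext x; simp only [Set.mem_inter_iff, Set.mem_Ici, Set.mem_Icc, max_le_iff]; tauto
    rw [integral_indicator measurableSet_Ici, Measure.restrict_restrict measurableSet_Ici, hset]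
    rfl
  have heq : psiAux a VR VF c = fun v : ℝ =>
      ∫ v' in Set.Icc VR VF,
        Set.indicator (Set.Ici v) (fun v' => Real.exp ((v' - v) * (v' + v - c) / (2 * a))) v' :=
    funext hrw
  rw [heq]
  have : StronglyMeasurable (Function.uncurry fun (v v' : ℝ) =>
      Set.indicator (Set.Ici v) (fun v' => Real.exp ((v' - v) * (v' + v - c) / (2 * a))) v') := by
    have heq : (Function.uncurry fun (v v' : ℝ) =>
        Set.indicator (Set.Ici v) (fun v' => Real.exp ((v' - v) * (v' + v - c) / (2 * a))) v')
        = Set.indicator {p : ℝ × ℝ | p.1 ≤ p.2}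
            (fun p => Real.exp ((p.2 - p.1) * (p.2 + p.1 - c) / (2 * a))) := by
      ext p
      by_cases h : p.1 ≤ p.2 <;>
        simp [Function.uncurry, Set.indicator_apply, Set.mem_Ici, h]
    rw [heq]
    apply Measurable.stronglyMeasurable
    apply Measurable.indicator (by fun_prop) (measurableSet_le measurable_fst measurable_snd)
  exact (this.integral_prod_right).measurable

lemma gauss_integrable (a t : ℝ) (ha : 0 < a) :
    Integrable (fun v => Real.exp (-(v - t)^2 / (2*a))) := by
  have h : (fun v => Real.exp (-(v - t)^2 / (2*a)))
      = fun v => Real.exp (-(1/(2*a)) * (v - t)^2) := by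
    ext v; congr 1; field_simp
  rw [h]
  exact (integrable_exp_neg_mul_sq (by positivity)).comp_sub_right t

lemma psi_integrableOn (a VR VF c : ℝ) (ha : 0 < a) (hV : VR < VF) :
    IntegrableOn (psiAux a VR VF c) (Set.Iic VF) := by
  apply Integrable.mono' (g := fun v =>
    (VF - VR) * Real.exp ((max |VR| |VF| + |c|/2)^2 / (2*a)) * Real.exp (-(v - c/2)^2 / (2*a)))
  · exact (((gauss_integrable a (c/2) ha).const_mul _)).integrableOn
  · exact ((psi_measurable a VR VF c).aestronglyMeasurable).restrict
  · apply Filter.Eventually.of_forall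
    intro v
    rw [Real.norm_eq_abs, abs_of_nonneg (psi_nonneg a VR VF c v)]
    exact psi_le a VR VF c ha hV v

lemma phi_antitone (a VR VF : ℝ) (ha : 0 < a) (hV : VR < VF) {c c' : ℝ} (h : c ≤ c') :
    phiAux a VR VF c' ≤ phiAux a VR VF c := by
  apply setIntegral_mono_on (psi_integrableOn a VR VF c' ha hV)
    (psi_integrableOn a VR VF c ha hV) measurableSet_Iic
  exact fun v _ => psi_antitone a VR VF ha h v

lemma phi_le (a VR VF c : ℝ) (ha : 0 < a) (hV : VR < VF) :
    phiAux a VR VF c ≤ (VF - VR) * Real.exp ((max |VR| |VF| + |c|/2)^2 / (2*a)) *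
      (∫ x : ℝ, Real.exp (-x^2 / (2*a))) := by
  have h1 : phiAux a VR VF c ≤
      ∫ v in Set.Iic VF, (VF - VR) * Real.exp ((max |VR| |VF| + |c|/2)^2 / (2*a)) *
        Real.exp (-(v - c/2)^2 / (2*a)) := by
    apply setIntegral_mono_on (psi_integrableOn a VR VF c ha hV)
      (((gauss_integrable a (c/2) ha).const_mul _).integrableOn) measurableSet_Iic
    exact fun v _ => psi_le a VR VF c ha hV v
  have h2 : (∫ v in Set.Iic VF, (VF - VR) * Real.exp ((max |VR| |VF| + |c|/2)^2 / (2*a)) *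
        Real.exp (-(v - c/2)^2 / (2*a)))
      ≤ ∫ v : ℝ, (VF - VR) * Real.exp ((max |VR| |VF| + |c|/2)^2 / (2*a)) *
        Real.exp (-(v - c/2)^2 / (2*a)) := by
    apply setIntegral_le_integral ((gauss_integrable a (c/2) ha).const_mul _)
    apply Filter.Eventually.of_forall; intro v
    exact mul_nonneg (mul_nonneg (by linarith) (Real.exp_pos _).le) (Real.exp_pos _).le
  have h3 : (∫ v : ℝ, (VF - VR) * Real.exp ((max |VR| |VF| + |c|/2)^2 / (2*a)) *
        Real.exp (-(v - c/2)^2 / (2*a)))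
      = (VF - VR) * Real.exp ((max |VR| |VF| + |c|/2)^2 / (2*a)) *
        (∫ x : ℝ, Real.exp (-x^2 / (2*a))) := by
    rw [integral_const_mul]
    congr 1
    have := MeasureTheory.integral_sub_right_eq_self
      (μ := volume) (fun x => Real.exp (-x^2 / (2*a))) (c/2)
    simpa using this
  linarith

lemma phi_lower (a VR VF c : ℝ) (ha : 0 < a) (hV : VR < VF) :
    (VF - VR)^2 / 2 *
      Real.exp (-((VF - VR) * (2 * max |VR| |VF| + |c|)) / (2*a)) ≤ phiAux a VR VF c := by
  set M0 := max |VR| |VF| with hM0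
  set β := (VF - VR) * (2 * M0 + |c|) / (2*a) with hβ
  -- pointwise lower bound for psi on [VR, VF]
  have hpsi : ∀ v ∈ Set.Icc VR VF, (VF - v) * Real.exp (-β) ≤ psiAux a VR VF c v := by
    intro v hv
    have hmax : max VR v = v := max_eq_right hv.1
    have hlow : ∀ x ∈ Set.Icc v VF,
        Real.exp (-β) ≤ Real.exp ((x - v) * (x + v - c) / (2 * a)) := by
      intro x hx
      apply Real.exp_le_exp.2
      rw [hβ, ← neg_div]
      apply div_le_div_of_nonneg_right ?_ (by linarith)
      have habs : |(x - v) * (x + v - c)| ≤ (VF - VR) * (2 * M0 + |c|) := by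
        rw [abs_mul]
        apply mul_le_mul ?_ ?_ (abs_nonneg _) (by linarith)
        · rw [abs_le]
          constructor <;> [linarith [hx.1, hx.2, hv.1, hv.2]; linarith [hx.1, hx.2, hv.1, hv.2]]
        · calc |x + v - c| ≤ |x + v| + |c| := abs_sub _ _
            _ ≤ 2 * M0 + |c| := by
                have hxm : |x| ≤ M0 := by
                  rw [abs_le]
                  refine ⟨?_, le_trans (le_trans hx.2 (le_abs_self VF)) (le_max_right _ _)⟩
                  have h1 : VR ≤ x := le_trans hv.1 hx.1
                  linarith [neg_abs_le VR, le_max_left |VR| |VF|]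
                have hvm : |v| ≤ M0 := by
                  rw [abs_le]
                  refine ⟨?_, le_trans (le_trans hv.2 (le_abs_self VF)) (le_max_right _ _)⟩
                  linarith [neg_abs_le VR, le_max_left |VR| |VF|, hv.1]
                have := abs_add_le x v
                linarith
      linarith [neg_abs_le ((x - v) * (x + v - c)), habs]
    have hconst : (∫ _ in Set.Icc v VF, Real.exp (-β)) = (VF - v) * Real.exp (-β) := by
      rw [setIntegral_const, measureReal_def, Real.volume_Icc, ENNReal.toReal_ofReal (by linarith [hv.2])]
      simp [smul_eq_mul]
    calc (VF - v) * Real.exp (-β) = ∫ _ in Set.Icc v VF, Real.exp (-β) := hconst.symm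
      _ ≤ ∫ x in Set.Icc v VF, Real.exp ((x - v) * (x + v - c) / (2 * a)) := by
          apply setIntegral_mono_on (integrableOn_const (by simp [Real.volume_Icc]))
            ((exp_cont a VR c v).integrableOn_Icc) measurableSet_Icc hlow
      _ = psiAux a VR VF c v := by rw [psiAux, hmax]
  -- integrate the lower bound over [VR, VF]
  have h1 : (∫ v in Set.Icc VR VF, (VF - v) * Real.exp (-β)) ≤ ∫ v in Set.Icc VR VF, psiAux a VR VF c v := by
    apply setIntegral_mono_on
      ((((continuous_const.sub continuous_id).mul continuous_const).integrableOn_Icc))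
      ((psi_integrableOn a VR VF c ha hV).mono_set (Set.Icc_subset_Iic_self))
      measurableSet_Icc hpsi
  have h2 : (∫ v in Set.Icc VR VF, psiAux a VR VF c v) ≤ phiAux a VR VF c := by
    apply setIntegral_mono_set (psi_integrableOn a VR VF c ha hV)
      (Filter.Eventually.of_forall fun v => psi_nonneg a VR VF c v)
      (HasSubset.Subset.eventuallyLE Set.Icc_subset_Iic_self)
  have h3 : (∫ v in Set.Icc VR VF, (VF - v) * Real.exp (-β)) = (VF - VR)^2/2 * Real.exp (-β) := by
    rw [integral_Icc_eq_integral_Ioc, ← intervalIntegral.integral_of_le hV.le]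
    rw [intervalIntegral.integral_mul_const]
    have : (∫ v in VR..VF, (VF - v)) = (VF - VR)^2/2 := by
      rw [show (fun v : ℝ => VF - v) = fun v : ℝ => VF - id v from rfl,
        intervalIntegral.integral_sub intervalIntegrable_const
          (continuous_id.intervalIntegrable _ _)]
      simp only [id_eq, integral_id, intervalIntegral.integral_const, smul_eq_mul]
      ring
    rw [this]
  rw [neg_div]
  linarith

lemma phi_pos (a VR VF c : ℝ) (ha : 0 < a) (hV : VR < VF) : 0 < phiAux a VR VF c := by
  have h : 0 < VF - VR := sub_pos.2 hV
  exact lt_of_lt_of_le (mul_pos (by positivity) (Real.exp_pos _)) (phi_lower a VR VF c ha hV)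

lemma psi_continuousAt (a VR VF v c₀ : ℝ) (ha : 0 < a) :
    ContinuousAt (fun c => psiAux a VR VF c v) c₀ := by
  apply continuousAt_of_dominated (bound := fun v' =>
      Real.exp ((v' - v) * (v' + v - (c₀ - 1)) / (2 * a)))
  · exact Filter.Eventually.of_forall fun c =>
      (exp_cont a VR c v).aestronglyMeasurable.restrict
  · apply Filter.eventually_of_mem (Metric.ball_mem_nhds c₀ one_pos)
    intro c hc
    rw [Metric.mem_ball, Real.dist_eq] at hc
    apply (ae_restrict_iff' measurableSet_Icc).2
    apply Filter.Eventually.of_forall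
    intro x hx
    rw [Real.norm_eq_abs, abs_of_pos (Real.exp_pos _)]
    apply Real.exp_le_exp.2
    have hxv : 0 ≤ x - v := by
      have := le_trans (le_max_right VR v) hx.1; linarith
    have hcc : c₀ - 1 ≤ c := by
      cases abs_lt.1 hc; linarith
    apply div_le_div_of_nonneg_right ?_ (by linarith)
    nlinarith
  · exact (exp_cont a VR (c₀ - 1) v).integrableOn_Icc
  · exact Filter.Eventually.of_forall fun x => by fun_prop

lemma phi_continuous (a VR VF : ℝ) (ha : 0 < a) (hV : VR < VF) :
    Continuous (phiAux a VR VF) := by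
  rw [continuous_iff_continuousAt]
  intro c₀
  apply continuousAt_of_dominated (bound := psiAux a VR VF (c₀ - 1))
  · exact Filter.Eventually.of_forall fun c =>
      (psi_measurable a VR VF c).aestronglyMeasurable.restrict
  · apply Filter.eventually_of_mem (Metric.ball_mem_nhds c₀ one_pos)
    intro c hc
    rw [Metric.mem_ball, Real.dist_eq] at hc
    apply Filter.Eventually.of_forall
    intro v
    rw [Real.norm_eq_abs, abs_of_nonneg (psi_nonneg a VR VF c v)]
    apply psi_antitone a VR VF ha ?_ v
    cases abs_lt.1 hc; linarith
  · exact psi_integrableOn a VR VF (c₀ - 1) ha hV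
  · exact Filter.Eventually.of_forall fun v => psi_continuousAt a VR VF v c₀ ha

/-- Realization of a prescribed output signal (Theorem 4.1, existence part): there is
`N̄ > 0` with `N̄ ∫ S Z_{N̄,I} = a`; then `H = (N̄/a) Z_{N̄,I} S` is a probability
density whose stationary state has normalized output signal `S`. -/
theorem stmt12 (a VR VF : ℝ) (ha : 0 < a) (hV : VR < VF)
    (σ : ℝ → ℝ) (hσC2 : ContDiff ℝ 2 σ) (hσ0 : ∀ N, 0 ≤ N → 0 ≤ σ N)
    (hσ' : ∀ N, 0 ≤ N → 0 ≤ deriv σ N)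
    (σM : ℝ) (hσM : ∀ N, 0 ≤ N → σ N ≤ σM)
    (I : ℝ → ℝ) (hImeas : Measurable I) (nI : ℝ) (hI : ∀ x, |I x| ≤ nI)
    (S : ℝ → ℝ) (hSmeas : Measurable S) (hS0 : ∀ w, 0 ≤ S w)
    (hSint : Integrable S) (hS1 : (∫ w, S w) = 1)
    (hSexp : IntegrableOn (fun w => S w * Real.exp ((nI + |w| * σM) ^ 2 / a))
      (Set.Iic 0)) :
    ∃ N > 0,
      N * (∫ w, S w * Zfun a VR VF I σ w N) = a ∧
      (∫ w, N / a * Zfun a VR VF I σ w N * S w) = 1 ∧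
      (∀ w, N * S w =
        a * (N / a * Zfun a VR VF I σ w N * S w) / Zfun a VR VF I σ w N) ∧
      a * (∫ w, (N / a * Zfun a VR VF I σ w N * S w) / Zfun a VR VF I σ w N) = N := by
  have hVV : 0 < VF - VR := sub_pos.2 hV
  have hnI : 0 ≤ nI := le_trans (abs_nonneg _) (hI 0)
  have hσM0 : 0 ≤ σM := le_trans (hσ0 0 le_rfl) (hσM 0 le_rfl)
  have hσcont : Continuous σ := hσC2.continuous
  set M0 : ℝ := max |VR| |VF| with hM0
  have hM00 : 0 ≤ M0 := le_trans (abs_nonneg _) (le_max_left _ _)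
  have hZ : ∀ w N, Zfun a VR VF I σ w N = phiAux a VR VF (2 * I w + 2 * w * σ N) := by
    intro w N
    unfold Zfun phiAux psiAux
    simp only [sub_sub]
  -- bounds on the drift parameter
  have hclow : ∀ w N, 0 ≤ N →
      -(2 * (nI + max (-w) 0 * σM)) ≤ 2 * I w + 2 * w * σ N := by
    intro w N hN
    have hIw := (abs_le.1 (hI w)).1
    have h1 := hσM N hN
    have h2 := hσ0 N hN
    rcases le_total 0 w with hw | hw
    · have hmax : max (-w) 0 = 0 := max_eq_right (neg_nonpos.2 hw)
      rw [hmax]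
      nlinarith [mul_nonneg hw h2]
    · have hmax : max (-w) 0 = -w := max_eq_left (neg_nonneg.2 hw)
      rw [hmax]
      nlinarith [mul_le_mul_of_nonneg_left h1 (neg_nonneg.2 hw)]
  have hcabs : ∀ w N, 0 ≤ N → |2 * I w + 2 * w * σ N| ≤ 2 * (nI + |w| * σM) := by
    intro w N hN
    have h1 := hσM N hN
    have h2 := hσ0 N hN
    calc |2 * I w + 2 * w * σ N| ≤ |2 * I w| + |2 * w * σ N| := abs_add_le _ _
      _ ≤ 2 * (nI + |w| * σM) := by
          rw [abs_mul, abs_mul, abs_mul, abs_of_nonneg h2]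
          have h3 : |w| * σ N ≤ |w| * σM := mul_le_mul_of_nonneg_left h1 (abs_nonneg w)
          have := hI w
          rw [abs_of_nonneg (by norm_num : (0:ℝ) ≤ 2)]
          nlinarith
  set Cg : ℝ := ∫ x : ℝ, Real.exp (-x^2 / (2*a)) with hCg
  have hCg0 : 0 ≤ Cg := integral_nonneg fun x => (Real.exp_pos _).le
  -- uniform (in N ≥ 0) upper bound for phi
  set Zb : ℝ → ℝ := fun w =>
    (VF - VR) * Real.exp ((M0 + (nI + max (-w) 0 * σM))^2 / (2*a)) * Cg with hZbdef
  have hZb0 : ∀ w, 0 ≤ Zb w := fun w => by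
    apply mul_nonneg (mul_nonneg hVV.le (Real.exp_pos _).le) hCg0
  have hZb : ∀ w N, 0 ≤ N → phiAux a VR VF (2 * I w + 2 * w * σ N) ≤ Zb w := by
    intro w N hN
    have hK : 0 ≤ nI + max (-w) 0 * σM :=
      add_nonneg hnI (mul_nonneg (le_max_right _ _) hσM0)
    have h1 := phi_antitone a VR VF ha hV (hclow w N hN)
    have h2 := phi_le a VR VF (-(2 * (nI + max (-w) 0 * σM))) ha hV
    have habs : |(-(2 * (nI + max (-w) 0 * σM)))| / 2 = nI + max (-w) 0 * σM := by
      rw [abs_neg, abs_of_nonneg (by linarith)]; ring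
    rw [habs] at h2
    exact le_trans h1 h2
  -- uniform (in N ≥ 0) lower bound for phi
  set mlow : ℝ → ℝ := fun w =>
    (VF - VR)^2 / 2 * Real.exp (-((VF - VR) * (2 * M0 + 2 * (nI + |w| * σM))) / (2*a))
    with hmlowdef
  have hml0 : ∀ w, 0 < mlow w := fun w => by positivity
  have hmlow : ∀ w N, 0 ≤ N → mlow w ≤ phiAux a VR VF (2 * I w + 2 * w * σ N) := by
    intro w N hN
    refine le_trans ?_ (phi_lower a VR VF _ ha hV)
    apply mul_le_mul_of_nonneg_left ?_ (by positivity)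
    apply Real.exp_le_exp.2
    apply div_le_div_of_nonneg_right ?_ (by linarith)
    have := hcabs w N hN
    nlinarith
  -- integrability of the dominating functions
  have hZbcont : Continuous Zb := by
    apply Continuous.mul ?_ continuous_const
    apply Continuous.mul continuous_const
    apply Real.continuous_exp.comp
    apply Continuous.div_const
    apply Continuous.pow
    exact continuous_const.add (continuous_const.add
      ((continuous_neg.max continuous_const).mul continuous_const))
  have hSZbInt : Integrable (fun w => S w * Zb w) := by
    have hmeas : AEStronglyMeasurable (fun w => S w * Zb w) volume :=
      (hSmeas.mul hZbcont.measurable).aestronglyMeasurable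
    have hIic : IntegrableOn (fun w => S w * Zb w) (Set.Iic 0) := by
      apply Integrable.mono' (g := fun w =>
        ((VF - VR) * Cg * Real.exp (M0^2/a)) * (S w * Real.exp ((nI + |w| * σM)^2 / a)))
        (hSexp.const_mul _) hmeas.restrict
      apply (ae_restrict_iff' measurableSet_Iic).2
      apply Filter.Eventually.of_forall
      intro w hw
      rw [Real.norm_eq_abs, abs_of_nonneg (mul_nonneg (hS0 w) (hZb0 w))]
      have hmax : max (-w) 0 = |w| := by
        rw [abs_of_nonpos hw]; exact max_eq_left (neg_nonneg.2 hw)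
      have hKw : 0 ≤ nI + |w| * σM := add_nonneg hnI (mul_nonneg (abs_nonneg _) hσM0)
      have e1 : Real.exp ((M0 + (nI + |w| * σM))^2 / (2*a))
          ≤ Real.exp (M0^2/a) * Real.exp ((nI + |w| * σM)^2 / a) := by
        rw [← Real.exp_add]
        apply Real.exp_le_exp.2
        have h2 : (M0 + (nI + |w| * σM))^2 ≤ 2*(M0^2 + (nI + |w| * σM)^2) := by
          nlinarith [sq_nonneg (M0 - (nI + |w| * σM))]
        calc (M0 + (nI + |w| * σM))^2 / (2*a)
            ≤ (2*(M0^2 + (nI + |w| * σM)^2)) / (2*a) :=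
              div_le_div_of_nonneg_right h2 (by linarith)
          _ = M0^2/a + (nI + |w| * σM)^2/a := by field_simp
      have hZbw : Zb w ≤ ((VF - VR) * Cg * Real.exp (M0^2/a)) *
          Real.exp ((nI + |w| * σM)^2 / a) := by
        rw [hZbdef]
        simp only [hmax]
        calc (VF - VR) * Real.exp ((M0 + (nI + |w| * σM))^2 / (2*a)) * Cg
            ≤ (VF - VR) * (Real.exp (M0^2/a) * Real.exp ((nI + |w| * σM)^2 / a)) * Cg := by
              apply mul_le_mul_of_nonneg_right (mul_le_mul_of_nonneg_left e1 hVV.le) hCg0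
          _ = ((VF - VR) * Cg * Real.exp (M0^2/a)) * Real.exp ((nI + |w| * σM)^2 / a) := by
              ring
      calc S w * Zb w ≤ S w * (((VF - VR) * Cg * Real.exp (M0^2/a)) *
            Real.exp ((nI + |w| * σM)^2 / a)) := mul_le_mul_of_nonneg_left hZbw (hS0 w)
        _ = ((VF - VR) * Cg * Real.exp (M0^2/a)) * (S w * Real.exp ((nI + |w| * σM)^2 / a)) := by
            ring
    have hIoi : IntegrableOn (fun w => S w * Zb w) (Set.Ioi 0) := by
      apply Integrable.mono' (g := fun w =>
        ((VF - VR) * Real.exp ((M0 + nI)^2 / (2*a)) * Cg) * S w)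
        ((hSint.const_mul _).integrableOn)
        hmeas.restrict
      apply (ae_restrict_iff' measurableSet_Ioi).2
      apply Filter.Eventually.of_forall
      intro w hw
      rw [Real.norm_eq_abs, abs_of_nonneg (mul_nonneg (hS0 w) (hZb0 w))]
      have hmax : max (-w) 0 = 0 := max_eq_right (neg_nonpos.2 (le_of_lt hw))
      rw [hZbdef]
      simp only [hmax, zero_mul, add_zero]
      ring_nf
      exact le_refl _
    have := hIic.union hIoi
    rw [Set.Iic_union_Ioi] at this
    exact integrableOn_univ.1 this
  have hmlowcont : Continuous mlow := by
    apply Continuous.mul continuous_const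
    apply Real.continuous_exp.comp
    apply Continuous.div_const
    apply Continuous.neg
    exact continuous_const.mul (continuous_const.add
      (continuous_const.mul (continuous_const.add (continuous_abs.mul continuous_const))))
  have hSmlInt : Integrable (fun w => S w * mlow w) := by
    apply Integrable.mono' (g := fun w => (VF - VR)^2/2 * S w)
      (hSint.const_mul _) (hSmeas.mul hmlowcont.measurable).aestronglyMeasurable
    apply Filter.Eventually.of_forall
    intro w
    rw [Real.norm_eq_abs, Pi.mul_apply, abs_of_nonneg (mul_nonneg (hS0 w) (hml0 w).le)]
    have hmw : mlow w ≤ (VF - VR)^2/2 := by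
      rw [hmlowdef]
      have harg : -((VF - VR) * (2 * M0 + 2 * (nI + |w| * σM))) / (2*a) ≤ 0 := by
        apply div_nonpos_of_nonpos_of_nonneg ?_ (by linarith)
        have hKw : 0 ≤ nI + |w| * σM := add_nonneg hnI (mul_nonneg (abs_nonneg _) hσM0)
        nlinarith
      have := Real.exp_le_one_iff.2 harg
      nlinarith
    calc S w * mlow w ≤ S w * ((VF - VR)^2/2) := mul_le_mul_of_nonneg_left hmw (hS0 w)
      _ = (VF - VR)^2/2 * S w := by ring
  -- the map N ↦ ∫ S·φ(c(·,N))
  have hcmeas : ∀ N : ℝ, Measurable (fun w => 2 * I w + 2 * w * σ N) := by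
    intro N
    exact (hImeas.const_mul 2).add ((measurable_id.const_mul 2).mul_const (σ N))
  have hintmeas : ∀ N : ℝ, AEStronglyMeasurable
      (fun w => S w * phiAux a VR VF (2 * I w + 2 * w * σ N)) volume := by
    intro N
    exact (hSmeas.mul (((phi_continuous a VR VF ha hV).measurable).comp
      (hcmeas N))).aestronglyMeasurable
  have hint : ∀ N : ℝ, 0 ≤ N →
      Integrable (fun w => S w * phiAux a VR VF (2 * I w + 2 * w * σ N)) := by
    intro N hN
    apply Integrable.mono' hSZbInt (hintmeas N)
    apply Filter.Eventually.of_forall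
    intro w
    rw [Real.norm_eq_abs, abs_of_nonneg (mul_nonneg (hS0 w)
      (phi_pos a VR VF _ ha hV).le)]
    exact mul_le_mul_of_nonneg_left (hZb w N hN) (hS0 w)
  set m : ℝ := ∫ w, S w * mlow w with hmdef
  have hm : 0 < m := by
    rcases (integral_nonneg fun w => mul_nonneg (hS0 w) (hml0 w).le :
        (0:ℝ) ≤ m).lt_or_eq with h | h
    · exact h
    · exfalso
      have h0 : (∫ w, S w * mlow w) = 0 := h.symm
      have hae := (integral_eq_zero_iff_of_nonneg
        (fun w => mul_nonneg (hS0 w) (hml0 w).le) hSmlInt).1 h0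
      have hSae : S =ᵐ[volume] 0 := by
        filter_upwards [hae] with w hw
        have := (hml0 w).ne'
        have : S w = 0 := by
          by_contra hSw
          exact hSw (by
            have := mul_eq_zero.1 hw
            tauto)
        simpa using this
      rw [integral_congr_ae hSae] at hS1
      simp at hS1
  have hFlb : ∀ N : ℝ, 0 ≤ N →
      m ≤ ∫ w, S w * phiAux a VR VF (2 * I w + 2 * w * σ N) := by
    intro N hN
    apply integral_mono hSmlInt (hint N hN)
    intro w
    exact mul_le_mul_of_nonneg_left (hmlow w N hN) (hS0 w)
  have hFcont : ContinuousOn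
      (fun N => ∫ w, S w * phiAux a VR VF (2 * I w + 2 * w * σ N)) (Set.Ici 0) := by
    intro N₀ hN₀
    apply continuousWithinAt_of_dominated (bound := fun w => S w * Zb w)
    · exact Filter.Eventually.of_forall fun N => hintmeas N
    · apply Filter.eventually_of_mem self_mem_nhdsWithin
      intro N hN
      apply Filter.Eventually.of_forall
      intro w
      rw [Real.norm_eq_abs, abs_of_nonneg (mul_nonneg (hS0 w)
        (phi_pos a VR VF _ ha hV).le)]
      exact mul_le_mul_of_nonneg_left (hZb w N hN) (hS0 w)
    · exact hSZbInt
    · apply Filter.Eventually.of_forall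
      intro w
      apply Continuous.continuousWithinAt
      apply continuous_const.mul
      apply (phi_continuous a VR VF ha hV).comp
      exact continuous_const.add (continuous_const.mul hσcont)
  -- the IVT argument
  set b : ℝ := max 1 (a / m) with hbdef
  have hb1 : (1:ℝ) ≤ b := le_max_left _ _
  have hb0 : (0:ℝ) ≤ b := by linarith
  have hGcont : ContinuousOn
      (fun N => N * ∫ w, S w * phiAux a VR VF (2 * I w + 2 * w * σ N)) (Set.Icc 0 b) :=
    (continuousOn_id.mul (hFcont.mono Set.Icc_subset_Ici_self))
  have hGb : a ≤ b * ∫ w, S w * phiAux a VR VF (2 * I w + 2 * w * σ b) := by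
    have h1 : a / m * m ≤ b * m := mul_le_mul_of_nonneg_right (le_max_right _ _) hm.le
    have h2 : b * m ≤ b * ∫ w, S w * phiAux a VR VF (2 * I w + 2 * w * σ b) :=
      mul_le_mul_of_nonneg_left (hFlb b hb0) hb0
    rw [div_mul_cancel₀ a hm.ne'] at h1
    linarith
  have hmem : a ∈ Set.Icc
      ((fun N => N * ∫ w, S w * phiAux a VR VF (2 * I w + 2 * w * σ N)) 0)
      ((fun N => N * ∫ w, S w * phiAux a VR VF (2 * I w + 2 * w * σ N)) b) := by
    constructor
    · simp only [zero_mul]; exact ha.le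
    · exact hGb
  obtain ⟨N, hNmem, hGN⟩ := intermediate_value_Icc hb0 hGcont hmem
  simp only at hGN
  have hNnn : 0 ≤ N := hNmem.1
  have hN0 : 0 < N := by
    rcases hNnn.lt_or_eq with h | h
    · exact h
    · exfalso; rw [← h, zero_mul] at hGN; linarith
  -- conclusions
  have hFN : (∫ w, S w * phiAux a VR VF (2 * I w + 2 * w * σ N)) = a / N := by
    rw [eq_div_iff hN0.ne']
    linarith [hGN]
  refine ⟨N, hN0, ?_, ?_, ?_, ?_⟩
  · simp only [hZ]
    exact hGN
  · simp only [hZ]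
    have heq : (fun w => N / a * phiAux a VR VF (2 * I w + 2 * w * σ N) * S w)
        = fun w => (N / a) * (S w * phiAux a VR VF (2 * I w + 2 * w * σ N)) := by
      funext w; ring
    rw [heq, integral_const_mul, hFN]
    field_simp
  · intro w
    simp only [hZ]
    have hz := (phi_pos a VR VF (2 * I w + 2 * w * σ N) ha hV).ne'
    generalize phiAux a VR VF (2 * I w + 2 * w * σ N) = p at hz ⊢
    field_simp
  · simp only [hZ]
    have heq : (fun w => N / a * phiAux a VR VF (2 * I w + 2 * w * σ N) * S w /
        phiAux a VR VF (2 * I w + 2 * w * σ N)) = fun w => (N / a) * S w := by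
      funext w
      have hz := (phi_pos a VR VF (2 * I w + 2 * w * σ N) ha hV).ne'
      generalize phiAux a VR VF (2 * I w + 2 * w * σ N) = p at hz ⊢
      field_simp
    rw [heq, integral_const_mul, hS1]
    field_simp
end

section
/- Uniqueness of the realizing activity for inhibitory output signals (Theorem 4.1, uniqueness part): assume σ is of class C² with σ' ≥ 0 and σ_M = sup σ < ∞, let I : ℝ → ℝ be bounded measurable, and let S : ℝ → [0,∞) be measurable with ∫_ℝ S(w) dw = 1 and S(w) = 0 for almost every w > 0. Then there is at most one N̄ > 0 such that N̄ · ∫_ℝ S(w) Z_{N̄,I}(w) dw = a. -/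
open MeasureTheory Real Set Filter

lemma F_meas (a VR VF c : ℝ) :
    Measurable (fun v => ∫ v' in Set.Icc (max VR v) VF,
      Real.exp ((v' - v) * (v' + v - c) / (2 * a))) := by
  set T : Set (ℝ × ℝ) := {q : ℝ × ℝ | max VR q.1 ≤ q.2 ∧ q.2 ≤ VF} with hT
  have hset : MeasurableSet T :=
    (measurableSet_le (measurable_const.max measurable_fst) measurable_snd).inter
      (measurableSet_le measurable_snd measurable_const)
  have hg : Measurable fun q : ℝ × ℝ =>
      T.indicator (fun q : ℝ × ℝ => Real.exp ((q.2 - q.1) * (q.2 + q.1 - c) / (2 * a))) q := by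
    apply Measurable.indicator _ hset
    fun_prop
  have key : ∀ v, (∫ v' in Set.Icc (max VR v) VF,
        Real.exp ((v' - v) * (v' + v - c) / (2 * a)))
      = ∫ v', T.indicator
          (fun q : ℝ × ℝ => Real.exp ((q.2 - q.1) * (q.2 + q.1 - c) / (2 * a))) (v, v') := by
    intro v
    have hfun : (fun v' => T.indicator
          (fun q : ℝ × ℝ => Real.exp ((q.2 - q.1) * (q.2 + q.1 - c) / (2 * a))) (v, v'))
        = (Set.Icc (max VR v) VF).indicator
          (fun v' => Real.exp ((v' - v) * (v' + v - c) / (2 * a))) := by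
      funext v'
      by_cases h : v' ∈ Set.Icc (max VR v) VF
      · rw [Set.indicator_of_mem h, Set.indicator_of_mem]
        exact ⟨h.1, h.2⟩
      · rw [Set.indicator_of_notMem h, Set.indicator_of_notMem]
        simpa [hT, Set.mem_setOf_eq, Set.mem_Icc] using h
    rw [hfun, integral_indicator measurableSet_Icc]
  simp_rw [key]
  exact hg.stronglyMeasurable.integral_prod_right'.measurable

lemma F_integrable (a VR VF c : ℝ) (ha : 0 < a) (hV : VR < VF) :
    IntegrableOn (fun v => ∫ v' in Set.Icc (max VR v) VF,
      Real.exp ((v' - v) * (v' + v - c) / (2 * a))) (Set.Iic VF) := by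
  set M : ℝ := max |VR| |VF| with hM
  set K : ℝ := (M ^ 2 + |c| * M + c ^ 2 / 2) / (2 * a) with hK
  have h2a : (0:ℝ) < 2 * a := by linarith
  have hexp : ∀ v : ℝ, v ≤ VF → ∀ v' ∈ Set.Icc (max VR v) VF,
      (v' - v) * (v' + v - c) / (2 * a) ≤ K - 1 / (4 * a) * v ^ 2 := by
    intro v hv v' hv'
    have h1 : VR ≤ v' := le_trans (le_max_left _ _) hv'.1
    have h2 : v' ≤ VF := hv'.2
    have hMa : |VR| ≤ M := le_max_left _ _
    have hMb : |VF| ≤ M := le_max_right _ _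
    have hM1 : -M ≤ v' := by nlinarith [neg_abs_le VR]
    have hM2 : v' ≤ M := by nlinarith [le_abs_self VF]
    have hc1 : c ≤ |c| := le_abs_self c
    have hc2 : -|c| ≤ c := neg_abs_le c
    have hX : (v' - v) * (v' + v - c) ≤ M ^ 2 + |c| * M + c ^ 2 / 2 - v ^ 2 / 2 := by
      nlinarith [sq_nonneg (c - v), mul_nonneg (sub_nonneg.2 hc1) (sub_nonneg.2 hM2),
        mul_nonneg (sub_nonneg.2 (neg_le.1 hc2)) (sub_nonneg.2 (neg_le.1 hM1)),
        mul_nonneg (sub_nonneg.2 hc1) (sub_nonneg.2 (neg_le.1 hM1)),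
        mul_nonneg (sub_nonneg.2 (neg_le.1 hc2)) (sub_nonneg.2 hM2)]
    have e1 : K - 1 / (4 * a) * v ^ 2 = (M ^ 2 + |c| * M + c ^ 2 / 2 - v ^ 2 / 2) / (2 * a) := by
      rw [hK]; field_simp; ring
    rw [e1]
    exact div_le_div_of_nonneg_right hX h2a.le
  have hbound : ∀ v : ℝ, ‖∫ v' in Set.Icc (max VR v) VF,
      Real.exp ((v' - v) * (v' + v - c) / (2 * a))‖
      ≤ (VF - VR) * Real.exp K * Real.exp (-(1 / (4 * a)) * v ^ 2) := by
    intro v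
    by_cases hv : v ≤ VF
    · have hC : ∀ v' ∈ Set.Icc (max VR v) VF,
          ‖Real.exp ((v' - v) * (v' + v - c) / (2 * a))‖
            ≤ Real.exp (K - 1 / (4 * a) * v ^ 2) := by
        intro v' hv'
        rw [Real.norm_eq_abs, abs_of_pos (Real.exp_pos _)]
        exact Real.exp_le_exp.2 (hexp v hv v' hv')
      have hfin : volume (Set.Icc (max VR v) VF) < ⊤ := measure_Icc_lt_top
      have hle := norm_setIntegral_le_of_norm_le_const (μ := volume) hfin hC
      refine hle.trans ?_
      have hvol : (volume (Set.Icc (max VR v) VF)).toReal ≤ VF - VR := by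
        rw [Real.volume_Icc, ENNReal.toReal_ofReal']
        refine max_le ?_ (by linarith)
        have := le_max_left VR v
        linarith
      have he : Real.exp (K - 1 / (4 * a) * v ^ 2)
          = Real.exp K * Real.exp (-(1 / (4 * a)) * v ^ 2) := by
        rw [← Real.exp_add]; ring_nf
      calc Real.exp (K - 1 / (4 * a) * v ^ 2) * (volume (Set.Icc (max VR v) VF)).toReal
          ≤ Real.exp (K - 1 / (4 * a) * v ^ 2) * (VF - VR) :=
            mul_le_mul_of_nonneg_left hvol (Real.exp_pos _).le
        _ = (VF - VR) * Real.exp K * Real.exp (-(1 / (4 * a)) * v ^ 2) := by rw [he]; ring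
    · have hemp : Set.Icc (max VR v) VF = ∅ := by
        apply Set.Icc_eq_empty
        intro h
        exact hv (le_trans (le_max_right VR v) h)
      rw [hemp]
      simp only [Measure.restrict_empty, integral_zero_measure, norm_zero]
      have hVV : (0:ℝ) < VF - VR := by linarith
      positivity
  have hg : Integrable (fun v : ℝ => (VF - VR) * Real.exp K
      * Real.exp (-(1 / (4 * a)) * v ^ 2)) := by
    have : (0:ℝ) < 1 / (4 * a) := by positivity
    exact (integrable_exp_neg_mul_sq this).const_mul _
  refine Integrable.mono' hg.integrableOn
    ((F_meas a VR VF c).aestronglyMeasurable.restrict) ?_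
  filter_upwards with v using hbound v

lemma ZC_anti (a VR VF : ℝ) (ha : 0 < a) (hV : VR < VF) {c₁ c₂ : ℝ} (h : c₂ ≤ c₁) :
    (∫ v in Set.Iic VF, ∫ v' in Set.Icc (max VR v) VF,
        Real.exp ((v' - v) * (v' + v - c₁) / (2 * a)))
    ≤ ∫ v in Set.Iic VF, ∫ v' in Set.Icc (max VR v) VF,
        Real.exp ((v' - v) * (v' + v - c₂) / (2 * a)) := by
  have h2a : (0:ℝ) < 2 * a := by linarith
  apply integral_mono_of_nonneg
  · filter_upwards with v
    exact setIntegral_nonneg measurableSet_Icc fun x _ => (Real.exp_pos _).le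
  · exact F_integrable a VR VF c₂ ha hV
  · filter_upwards with v
    have hcont : ∀ d : ℝ, IntegrableOn
        (fun v' => Real.exp ((v' - v) * (v' + v - d) / (2 * a)))
        (Set.Icc (max VR v) VF) := by
      intro d
      apply Continuous.integrableOn_Icc
      fun_prop
    apply setIntegral_mono_on (hcont c₁) (hcont c₂) measurableSet_Icc
    intro v' hv'
    apply Real.exp_le_exp.2
    apply div_le_div_of_nonneg_right _ h2a.le
    have hvv : v ≤ v' := le_trans (le_max_right VR v) hv'.1
    nlinarith

lemma Zfun_eq (a VR VF : ℝ) (I σ : ℝ → ℝ) (w N : ℝ) :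
    Zfun a VR VF I σ w N = ∫ v in Set.Iic VF, ∫ v' in Set.Icc (max VR v) VF,
      Real.exp ((v' - v) * (v' + v - (2 * I w + 2 * w * σ N)) / (2 * a)) := by
  unfold Zfun
  congr 1
  funext v
  congr 1
  funext v'
  congr 1
  ring

/-- Uniqueness of the realizing activity for inhibitory output signals
(Theorem 4.1, uniqueness part). -/
theorem stmt13 (a VR VF : ℝ) (ha : 0 < a) (hV : VR < VF)
    (σ : ℝ → ℝ) (hσC2 : ContDiff ℝ 2 σ) (hσ0 : ∀ N, 0 ≤ N → 0 ≤ σ N)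
    (hσ' : ∀ N, 0 ≤ N → 0 ≤ deriv σ N)
    (σM : ℝ) (hσM : ∀ N, 0 ≤ N → σ N ≤ σM)
    (I : ℝ → ℝ) (hImeas : Measurable I) (nI : ℝ) (hI : ∀ x, |I x| ≤ nI)
    (S : ℝ → ℝ) (hSmeas : Measurable S) (hS0 : ∀ w, 0 ≤ S w)
    (hSint : Integrable S) (hS1 : (∫ w, S w) = 1)
    (hSsupp : ∀ᵐ w : ℝ, 0 < w → S w = 0) :
    ∀ N₁ N₂ : ℝ, 0 < N₁ → 0 < N₂ →
      N₁ * (∫ w, S w * Zfun a VR VF I σ w N₁) = a →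
      N₂ * (∫ w, S w * Zfun a VR VF I σ w N₂) = a →
      N₁ = N₂ := by
  have hZnn : ∀ w N : ℝ, 0 ≤ Zfun a VR VF I σ w N := by
    intro w N
    unfold Zfun
    refine setIntegral_nonneg measurableSet_Iic fun v _ => ?_
    exact setIntegral_nonneg measurableSet_Icc fun x _ => (Real.exp_pos _).le
  have main : ∀ A B : ℝ, 0 < A → 0 < B → A ≤ B →
      A * (∫ w, S w * Zfun a VR VF I σ w A) = a →
      B * (∫ w, S w * Zfun a VR VF I σ w B) = a → A = B := by
    intro A B hA hB hAB eA eB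
    by_contra hne
    have hlt : A < B := lt_of_le_of_ne hAB hne
    have hσmono : σ A ≤ σ B := by
      have hmono : MonotoneOn σ (Set.Ici (0:ℝ)) := by
        refine monotoneOn_of_deriv_nonneg (convex_Ici 0)
          (hσC2.continuous.continuousOn)
          ((hσC2.differentiable (by norm_num)).differentiableOn) ?_
        intro x hx
        rw [interior_Ici] at hx
        exact hσ' x (le_of_lt hx)
      exact hmono hA.le hB.le hAB
    have hZ : ∀ w : ℝ, w ≤ 0 → Zfun a VR VF I σ w A ≤ Zfun a VR VF I σ w B := by
      intro w hw
      rw [Zfun_eq, Zfun_eq]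
      have hc : 2 * I w + 2 * w * σ B ≤ 2 * I w + 2 * w * σ A := by
        nlinarith [mul_nonneg (neg_nonneg.2 hw) (sub_nonneg.2 hσmono)]
      exact ZC_anti a VR VF ha hV hc
    have hint2 : Integrable (fun w => S w * Zfun a VR VF I σ w B) := by
      by_contra hni
      rw [integral_undef hni, mul_zero] at eB
      exact ha.ne' eB.symm
    have hmono_int : (∫ w, S w * Zfun a VR VF I σ w A)
        ≤ ∫ w, S w * Zfun a VR VF I σ w B := by
      apply integral_mono_of_nonneg _ hint2
      · filter_upwards [hSsupp] with w hw
        rcases le_or_gt w 0 with hw0 | hw0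
        · exact mul_le_mul_of_nonneg_left (hZ w hw0) (hS0 w)
        · rw [hw hw0]; simp
      · filter_upwards with w
        exact mul_nonneg (hS0 w) (hZnn w A)
    have hX2 : (∫ w, S w * Zfun a VR VF I σ w B) = a / B := by
      field_simp
      linarith [eB]
    have hX2pos : 0 < ∫ w, S w * Zfun a VR VF I σ w B := by
      rw [hX2]; positivity
    nlinarith [mul_le_mul_of_nonneg_left hmono_int hA.le,
      mul_lt_mul_of_pos_right hlt hX2pos]
  intro N₁ N₂ h1 h2 e1 e2
  rcases le_total N₁ N₂ with h | h
  · exact main N₁ N₂ h1 h2 h e1 e2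
  · exact (main N₂ N₁ h2 h1 h e2 e1).symm
end
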